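/- For M = [[α,β],[γ,δ]] ∈ SL₊(Γ_n(ℝ)), the identity |α - δ'|² + |β + γ'|² = ‖M‖² - 2 holds, where ‖M‖² = |α|² + |β|² + |γ|² + |δ|² and ' denotes the grade involution. Consequently ‖M‖² ≥ 2 for all M ∈ SL₊(Γ_n(ℝ)). -/

import Mathlib

open CliffordAlgebra

/-- The negative-definite quadratic form on `ℝ^m`, so that `CliffordAlgebra (Qneg m)`
is the Clifford algebra on `m` anticommuting generators each squaring to `-1`. -/
noncomputable def Qneg (m : ℕ) : QuadraticForm ℝ (Fin m → ℝ) :=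
  -(QuadraticMap.weightedSumSquares ℝ (fun _ : Fin m => (1 : ℝ)))

/-- The `h`-th generator `i_h`. -/
noncomputable def gen (m : ℕ) (h : Fin m) : CliffordAlgebra (Qneg m) :=
  ι (Qneg m) (Pi.single h 1)

/-- The scalar (grade-0) coefficient of a Clifford algebra element. -/
noncomputable def scalarPart {m : ℕ} (x : CliffordAlgebra (Qneg m)) : ℝ :=
  letI : Invertible (2 : ℝ) := invertibleOfNonzero two_ne_zero
  ExteriorAlgebra.algebraMapInv ((CliffordAlgebra.equivExterior (Qneg m)) x)

/-- Clifford conjugation `x ↦ x̄`, the composite of reversal and the grade involution. -/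
noncomputable def cconj {m : ℕ} (x : CliffordAlgebra (Qneg m)) : CliffordAlgebra (Qneg m) :=
  CliffordAlgebra.reverse (CliffordAlgebra.involute x)

/-- The square norm `|x|² = ∑ x_I²` of a Clifford element (sum of squares of the
coordinates in the standard monomial basis), realized as the scalar part of `x̄ x`. -/
noncomputable def cnormSq {m : ℕ} (x : CliffordAlgebra (Qneg m)) : ℝ :=
  scalarPart (cconj x * x)

/-- Clifford vectors: elements of the form `a₀ + a₁ i₁ + ⋯ + a_m i_m` (the paper's `V`). -/
def IsCliffordVector {m : ℕ} (x : CliffordAlgebra (Qneg m)) : Prop :=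
  ∃ (a : ℝ) (v : Fin m → ℝ), x = algebraMap ℝ _ a + ι (Qneg m) v

/-- The Clifford group `Γ`: products of invertible Clifford vectors. -/
noncomputable def CliffordGroup (m : ℕ) : Submonoid (CliffordAlgebra (Qneg m)) :=
  Submonoid.closure {x | IsCliffordVector x ∧ IsUnit x}

/-- The Vahlen conditions on the entries of a matrix `[[α,β],[γ,δ]] ∈ SL₊(Γ_n(ℝ))`. -/
def IsVahlen {m : ℕ} (α β γ δ : CliffordAlgebra (Qneg m)) : Prop :=
  (α ∈ CliffordGroup m ∨ α = 0) ∧ (β ∈ CliffordGroup m ∨ β = 0) ∧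
  (γ ∈ CliffordGroup m ∨ γ = 0) ∧ (δ ∈ CliffordGroup m ∨ δ = 0) ∧
  α * reverse δ - β * reverse γ = 1 ∧
  IsCliffordVector (α * reverse β) ∧ IsCliffordVector (γ * reverse δ) ∧
  IsCliffordVector (reverse γ * α) ∧ IsCliffordVector (reverse δ * β)

namespace Stmt13Aux

open CliffordAlgebra

variable {m : ℕ}

/-- scalar part as a linear map -/
noncomputable def τ (m : ℕ) : CliffordAlgebra (Qneg m) →ₗ[ℝ] ℝ :=
  letI : Invertible (2 : ℝ) := invertibleOfNonzero two_ne_zero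
  ExteriorAlgebra.algebraMapInv.toLinearMap ∘ₗ (CliffordAlgebra.equivExterior (Qneg m)).toLinearMap

lemma scalarPart_eq (x : CliffordAlgebra (Qneg m)) : scalarPart x = τ m x := rfl

lemma τ_algebraMap (r : ℝ) : τ m (algebraMap ℝ _ r) = r := by
  letI : Invertible (2 : ℝ) := invertibleOfNonzero two_ne_zero
  show ExteriorAlgebra.algebraMapInv ((equivExterior (Qneg m)) (algebraMap ℝ _ r)) = r
  rw [equivExterior, changeFormEquiv_apply, changeForm_algebraMap]
  exact ExteriorAlgebra.algebraMap_leftInverse _ r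

lemma τ_one : τ m 1 = 1 := by
  simpa using τ_algebraMap (m := m) 1

lemma τ_ι_mul (v : Fin m → ℝ) (x : CliffordAlgebra (Qneg m)) :
    τ m (ι (Qneg m) v * x) =
      - τ m (contractLeft (Q := Qneg m) (QuadraticMap.associated (R := ℝ) (-Qneg m) v) x) := by
  letI : Invertible (2 : ℝ) := invertibleOfNonzero two_ne_zero
  show ExteriorAlgebra.algebraMapInv ((equivExterior (Qneg m)) _) = _
  rw [equivExterior, changeFormEquiv_apply, changeForm_ι_mul, map_sub, map_mul,
    ← changeForm_contractLeft]
  have h0 : ExteriorAlgebra.algebraMapInv (CliffordAlgebra.ι (0 : QuadraticForm ℝ (Fin m → ℝ)) v)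
      = 0 := by
    have := ExteriorAlgebra.lift_ι_apply (R := ℝ) (A := ℝ)
      (0 : (Fin m → ℝ) →ₗ[ℝ] ℝ) (fun _ => by simp) v
    simpa [ExteriorAlgebra.algebraMapInv, ExteriorAlgebra.ι] using this
  rw [h0, zero_mul, zero_sub]
  rfl

variable {m : ℕ}

lemma Qneg_apply (v : Fin m → ℝ) : Qneg m v = -∑ i, v i * v i := by
  simp [Qneg, QuadraticMap.weightedSumSquares_apply]

lemma Qneg_single (h : Fin m) : Qneg m (Pi.single h 1) = -1 := by
  rw [Qneg_apply]
  norm_num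
  rw [Finset.sum_eq_single h] <;> simp +contextual [Pi.single_apply]

lemma Qneg_single_add_single (h k : Fin m) (hne : h ≠ k) :
    Qneg m (Pi.single h 1 + Pi.single k 1) = -2 := by
  rw [Qneg_apply]
  have : ∀ i, ((Pi.single h 1 + Pi.single k 1 : Fin m → ℝ) i) * ((Pi.single h 1 + Pi.single k 1 : Fin m → ℝ) i)
      = (if i = h then 1 else 0) + (if i = k then 1 else 0) := by
    intro i
    rcases eq_or_ne i h with rfl | ih <;> rcases eq_or_ne i k with rfl | ik <;>
      simp_all [Pi.single_apply]
  rw [Finset.sum_congr rfl fun i _ => this i, Finset.sum_add_distrib]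
  simp
  norm_num

lemma gen_sq (h : Fin m) : gen m h * gen m h = -1 := by
  rw [gen, ι_sq_scalar, Qneg_single, map_neg, map_one]

lemma gen_anticomm {h k : Fin m} (hne : h ≠ k) :
    gen m h * gen m k = -(gen m k * gen m h) := by
  have ho : (Qneg m).IsOrtho (Pi.single h 1) (Pi.single k 1) := by
    rw [QuadraticMap.IsOrtho]
    rw [Qneg_single, Qneg_single, Qneg_single_add_single h k hne]
    norm_num
  have := ι_mul_ι_add_swap_of_isOrtho (Q := Qneg m) ho
  rw [← gen, ← gen] at this
  exact eq_neg_of_add_eq_zero_left this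

lemma dual_single_ne (h k : Fin m) (hne : h ≠ k) :
    (QuadraticMap.associated (R := ℝ) (-Qneg m)) (Pi.single h 1) (Pi.single k 1) = 0 := by
  have h2 := QuadraticMap.two_nsmul_associated ℝ (-Qneg m)
  have h3 := congrArg (fun B => B (Pi.single h 1) (Pi.single k 1)) h2
  simp only [LinearMap.smul_apply, QuadraticMap.polarBilin_apply_apply,
    QuadraticMap.polar] at h3
  rw [QuadraticMap.neg_apply, QuadraticMap.neg_apply, QuadraticMap.neg_apply] at h3
  rw [show ((-Qneg m : QuadraticForm ℝ (Fin m → ℝ)))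
    = -Qneg m from rfl] at h3
  rw [Qneg_single_add_single h k hne, Qneg_single, Qneg_single, nsmul_eq_mul] at h3
  push_cast at h3
  linarith


/-- product of generators along a list of indices -/
noncomputable def PL (m : ℕ) (L : List (Fin m)) : CliffordAlgebra (Qneg m) :=
  (L.map (gen m)).prod

@[simp] lemma PL_nil : PL m [] = 1 := rfl

lemma PL_cons (h : Fin m) (t : List (Fin m)) : PL m (h :: t) = gen m h * PL m t := by
  simp [PL]

lemma PL_append (L K : List (Fin m)) : PL m (L ++ K) = PL m L * PL m K := by
  simp [PL]

lemma contract_PL_zero (d : Module.Dual ℝ (Fin m → ℝ)) (L : List (Fin m))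
    (hd : ∀ k ∈ L, d (Pi.single k 1) = 0) :
    contractLeft (Q := Qneg m) d (PL m L) = 0 := by
  induction L with
  | nil => simpa [PL] using contractLeft_one (Q := Qneg m) d
  | cons k t ih =>
    rw [PL_cons, gen, contractLeft_ι_mul, ih (fun j hj => hd j (List.mem_cons_of_mem _ hj)),
      hd k List.mem_cons_self]
    simp

lemma τ_PL_cons_eq_zero {h : Fin m} {t : List (Fin m)} (hht : h ∉ t) :
    τ m (PL m (h :: t)) = 0 := by
  rw [PL_cons, gen, τ_ι_mul, contract_PL_zero, map_zero, neg_zero]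
  intro k hk
  exact dual_single_ne h k (fun e => hht (e ▸ hk))


open scoped symmDiff

lemma sd_not_mem {h : Fin m} {s : Finset (Fin m)} (hs : h ∉ s) : {h} ∆ s = insert h s := by
  ext x
  simp only [Finset.mem_symmDiff, Finset.mem_singleton, Finset.mem_insert]
  constructor
  · tauto
  · rintro (rfl | hx)
    · exact Or.inl ⟨rfl, hs⟩
    · exact Or.inr ⟨hx, fun e => hs (e ▸ hx)⟩

lemma sd_mem_self {h : Fin m} {s : Finset (Fin m)} (hs : h ∉ s) : {h} ∆ (insert h s) = s := by
  ext x
  simp only [Finset.mem_symmDiff, Finset.mem_singleton, Finset.mem_insert]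
  constructor
  · rintro (⟨rfl, hx⟩ | ⟨(rfl | hx), hne⟩)
    · exact absurd (Or.inl rfl) hx
    · exact absurd rfl hne
    · exact hx
  · intro hx
    exact Or.inr ⟨Or.inr hx, fun e => hs (e ▸ hx)⟩

lemma sd_insert {h k : Fin m} {s : Finset (Fin m)} (hne : k ≠ h) (hs : k ∉ s) :
    insert k ({h} ∆ s) = {h} ∆ (insert k s) := by
  ext x
  simp only [Finset.mem_symmDiff, Finset.mem_singleton, Finset.mem_insert]
  constructor
  · rintro (rfl | (⟨rfl, hx⟩ | ⟨hx, hne'⟩))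
    · exact Or.inr ⟨Or.inl rfl, hne⟩
    · exact Or.inl ⟨rfl, fun h' => hx (h'.resolve_left (fun e => hne e.symm))⟩
    · exact Or.inr ⟨Or.inr hx, hne'⟩
  · rintro (⟨rfl, hx⟩ | ⟨(rfl | hx), hne'⟩)
    · exact Or.inr (Or.inl ⟨rfl, fun hx' => hx (Or.inr hx')⟩)
    · exact Or.inl rfl
    · exact Or.inr (Or.inr ⟨hx, hne'⟩)

lemma gen_mul_PL (h : Fin m) (L : List (Fin m)) (hL : L.Pairwise (· < ·)) :
    ∃ (c : ℝ) (M : List (Fin m)), M.Pairwise (· < ·) ∧ gen m h * PL m L = c • PL m M ∧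
      M.toFinset = {h} ∆ L.toFinset := by
  induction L with
  | nil =>
    exact ⟨1, [h], List.pairwise_singleton _ h, by simp [PL_cons], by ext x; simp [Finset.mem_symmDiff]⟩
  | cons k t ih =>
    obtain ⟨hk, hts⟩ := List.pairwise_cons.mp hL
    have hknt : k ∉ t := fun hm => lt_irrefl k (hk k hm)
    rcases lt_trichotomy h k with hlt | rfl | hgt
    · have hnotmem : h ∉ (k :: t).toFinset := by
        simp only [List.toFinset_cons, Finset.mem_insert, List.mem_toFinset]
        rintro (rfl | hm)
        · exact lt_irrefl h hlt
        · exact lt_irrefl h (hlt.trans (hk h hm))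
      refine ⟨1, h :: k :: t, ?_, by simp [PL_cons], ?_⟩
      · exact List.pairwise_cons.mpr ⟨fun b hb => by
          rcases List.mem_cons.mp hb with rfl | hb
          · exact hlt
          · exact hlt.trans (hk b hb), hL⟩
      · rw [sd_not_mem hnotmem]
        simp
    · refine ⟨-1, t, hts, ?_, ?_⟩
      · rw [PL_cons, ← mul_assoc, gen_sq]
        simp
      · rw [List.toFinset_cons, sd_mem_self (by simpa using hknt)]
    · obtain ⟨c, M, hM, hmul, hfin⟩ := ih hts
      have hkM : ∀ x ∈ M, k < x := by
        intro x hx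
        have : x ∈ ({h} ∆ t.toFinset : Finset (Fin m)) := hfin ▸ List.mem_toFinset.mpr hx
        rw [Finset.mem_symmDiff] at this
        rcases this with ⟨hx1, _⟩ | ⟨hx1, _⟩
        · exact (Finset.mem_singleton.mp hx1) ▸ hgt
        · exact hk x (List.mem_toFinset.mp hx1)
      refine ⟨-c, k :: M, List.pairwise_cons.mpr ⟨hkM, hM⟩, ?_, ?_⟩
      · rw [PL_cons, ← mul_assoc, gen_anticomm (ne_of_gt hgt), neg_mul, mul_assoc, hmul,
          PL_cons, mul_smul_comm]
        simp
      · rw [List.toFinset_cons, List.toFinset_cons, hfin,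
          sd_insert (ne_of_gt hgt).symm (by simpa using hknt)]

/-- the set of indices occurring an odd number of times -/
def oddSupp : List (Fin m) → Finset (Fin m)
  | [] => ∅
  | h :: t => {h} ∆ (oddSupp t)

lemma oddSupp_append (L K : List (Fin m)) :
    oddSupp (L ++ K) = oddSupp L ∆ oddSupp K := by
  induction L with
  | nil =>
    rw [List.nil_append]
    show oddSupp K = ∅ ∆ oddSupp K
    rw [show (∅ : Finset (Fin m)) = ⊥ from rfl, bot_symmDiff]
  | cons h t ih =>
    show oddSupp (h :: (t ++ K)) = _
    rw [oddSupp, ih, oddSupp, symmDiff_assoc]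

lemma oddSupp_nodup {L : List (Fin m)} (hL : L.Nodup) : oddSupp L = L.toFinset := by
  induction L with
  | nil => simp [oddSupp]
  | cons h t ih =>
    obtain ⟨hh, ht⟩ := List.nodup_cons.mp hL
    rw [oddSupp, ih ht, sd_not_mem (by simpa using hh), List.toFinset_cons]

lemma PL_reduce (J : List (Fin m)) :
    ∃ (c : ℝ) (M : List (Fin m)), M.Pairwise (· < ·) ∧ PL m J = c • PL m M ∧
      M.toFinset = oddSupp J := by
  induction J with
  | nil => exact ⟨1, [], List.Pairwise.nil, by simp, by simp [oddSupp]⟩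
  | cons h t ih =>
    obtain ⟨c, M, hM, hmul, hfin⟩ := ih
    obtain ⟨c', M', hM', hmul', hfin'⟩ := gen_mul_PL h M hM
    refine ⟨c * c', M', hM', ?_, ?_⟩
    · rw [PL_cons, hmul, mul_smul_comm, hmul', smul_smul]
    · rw [hfin', hfin, oddSupp]


lemma sorted_eq_of_toFinset_eq {L K : List (Fin m)} (hL : L.Pairwise (· < ·))
    (hK : K.Pairwise (· < ·)) (h : L.toFinset = K.toFinset) : L = K := by
  haveI : IsAntisymm (Fin m) (· < ·) := ⟨fun a b h1 h2 => absurd h1 (asymm h2)⟩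
  exact List.Perm.eq_of_pairwise' hL hK
    (List.perm_of_nodup_nodup_toFinset_eq hL.nodup hK.nodup h)

/-- cconj as a linear map -/
noncomputable def cconjL (m : ℕ) :
    CliffordAlgebra (Qneg m) →ₗ[ℝ] CliffordAlgebra (Qneg m) :=
  reverse (Q := Qneg m) ∘ₗ (involute (Q := Qneg m)).toLinearMap

lemma cconj_eq (x : CliffordAlgebra (Qneg m)) : cconj x = cconjL m x := rfl

lemma cconj_mul (a b : CliffordAlgebra (Qneg m)) : cconj (a * b) = cconj b * cconj a := by
  unfold cconj
  rw [map_mul, reverse.map_mul]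

lemma cconj_one : cconj (1 : CliffordAlgebra (Qneg m)) = 1 := by
  unfold cconj; simp

lemma cconj_gen (h : Fin m) : cconj (gen m h) = -(gen m h) := by
  unfold cconj
  rw [gen, involute_ι, map_neg, reverse_ι]

/-- the bilinear pairing `⟨x, y⟩ = τ (x̄ y)` -/
noncomputable def Tb (m : ℕ) :
    CliffordAlgebra (Qneg m) →ₗ[ℝ] CliffordAlgebra (Qneg m) →ₗ[ℝ] ℝ :=
  LinearMap.mk₂ ℝ (fun x y => τ m (cconj x * y))
    (fun a b y => by rw [cconj_eq, cconj_eq, cconj_eq, map_add, add_mul, map_add])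
    (fun r a y => by rw [cconj_eq, cconj_eq, map_smul, smul_mul_assoc, map_smul])
    (fun a b c => by rw [mul_add, map_add])
    (fun r a y => by rw [mul_smul_comm, map_smul])

lemma Tb_apply (x y : CliffordAlgebra (Qneg m)) : Tb m x y = τ m (cconj x * y) := rfl

lemma cnormSq_eq_Tb (x : CliffordAlgebra (Qneg m)) : cnormSq x = Tb m x x := rfl

lemma Tb_gen_mul (h : Fin m) (x y : CliffordAlgebra (Qneg m)) :
    Tb m (gen m h * x) y = -(Tb m x (gen m h * y)) := by
  rw [Tb_apply, Tb_apply, cconj_mul, cconj_gen, mul_assoc, neg_mul, mul_neg, ← mul_assoc,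
    map_neg]

lemma Tb_PL {L K : List (Fin m)} (hL : L.Pairwise (· < ·)) (hK : K.Pairwise (· < ·)) :
    Tb m (PL m L) (PL m K) = if L = K then 1 else 0 := by
  induction L generalizing K with
  | nil =>
    have h1 : Tb m (PL m []) (PL m K) = τ m (PL m K) := by
      rw [PL_nil, Tb_apply, cconj_one, one_mul]
    cases K with
    | nil => rw [h1, PL_nil, τ_one, if_pos rfl]
    | cons k t =>
      obtain ⟨hk, _⟩ := List.pairwise_cons.mp hK
      rw [h1, τ_PL_cons_eq_zero (fun hm => lt_irrefl k (hk k hm)), if_neg (by simp)]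
  | cons h t ih =>
    obtain ⟨hh, hts⟩ := List.pairwise_cons.mp hL
    have hhnt : h ∉ t := fun hm => lt_irrefl h (hh h hm)
    rw [PL_cons, Tb_gen_mul]
    by_cases hcase : ∃ t', K = h :: t'
    · obtain ⟨t', rfl⟩ := hcase
      obtain ⟨_, ht's⟩ := List.pairwise_cons.mp hK
      rw [PL_cons, ← mul_assoc, gen_sq, neg_one_mul, map_neg, neg_neg, ih hts ht's]
      by_cases he : t = t'
      · subst he; simp
      · rw [if_neg he, if_neg (by simpa using he)]
    · -- K does not start with h
      obtain ⟨c, M, hM, hmul, hfin⟩ := gen_mul_PL h K hK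
      rw [hmul, map_smul, smul_eq_mul, ih hts hM]
      have hne2 : t ≠ M := by
        intro rfl'
        subst rfl'
        by_cases hmem : h ∈ K.toFinset
        · -- then K = h :: t
          have hKt : K.toFinset = (h :: t).toFinset := by
            rw [List.toFinset_cons]
            have : ({h} ∆ K.toFinset : Finset (Fin m)) = K.toFinset.erase h := by
              ext x
              simp only [Finset.mem_symmDiff, Finset.mem_singleton, Finset.mem_erase]
              constructor
              · rintro (⟨rfl, hx⟩ | ⟨hx, hxne⟩)
                · exact absurd hmem hx
                · exact ⟨hxne, hx⟩
              · rintro ⟨hxne, hx⟩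
                exact Or.inr ⟨hx, hxne⟩
            rw [this] at hfin
            rw [hfin]
            exact (Finset.insert_erase hmem).symm
          have := sorted_eq_of_toFinset_eq hK (List.pairwise_cons.mpr ⟨hh, hts⟩) hKt
          exact hcase ⟨t, this⟩
        · -- h ∉ K, so M contains h but t doesn't
          rw [sd_not_mem (by simpa using fun hc => hmem hc)] at hfin
          have : h ∈ t.toFinset := hfin ▸ Finset.mem_insert_self h _
          exact hhnt (List.mem_toFinset.mp this)
      rw [if_neg hne2, mul_zero, neg_zero, if_neg]
      intro he
      exact hcase ⟨t, he.symm⟩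


/-- index type for the monomial basis: sorted lists -/
def SIdx (m : ℕ) := {L : List (Fin m) // L.Pairwise (· < ·)}

noncomputable def bas (m : ℕ) (i : SIdx m) : CliffordAlgebra (Qneg m) := PL m i.1

lemma span_bas_top : Submodule.span ℝ (Set.range (bas m)) = ⊤ := by
  rw [eq_top_iff]
  rintro x -
  have hmem : ∀ (i : SIdx m), bas m i ∈ Submodule.span ℝ (Set.range (bas m)) :=
    fun i => Submodule.subset_span ⟨i, rfl⟩
  have hmul : ∀ y ∈ Submodule.span ℝ (Set.range (bas m)),
      ∀ x ∈ Submodule.span ℝ (Set.range (bas m)),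
        x * y ∈ Submodule.span ℝ (Set.range (bas m)) := by
    intro y hy
    induction hy using Submodule.span_induction with
    | mem g hg =>
      obtain ⟨j, rfl⟩ := hg
      intro x hx
      induction hx using Submodule.span_induction with
      | mem g' hg' =>
        obtain ⟨i, rfl⟩ := hg'
        obtain ⟨c, M, hM, hmul, -⟩ := PL_reduce (i.1 ++ j.1)
        rw [bas, bas, ← PL_append, hmul]
        exact Submodule.smul_mem _ _ (hmem ⟨M, hM⟩)
      | zero => rw [zero_mul]; exact Submodule.zero_mem _
      | add a b _ _ ha hb => rw [add_mul]; exact Submodule.add_mem _ ha hb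
      | smul r a _ ha => rw [smul_mul_assoc]; exact Submodule.smul_mem _ _ ha
    | zero => intro x hx; rw [mul_zero]; exact Submodule.zero_mem _
    | add a b _ _ ha hb =>
      intro x hx
      rw [mul_add]
      exact Submodule.add_mem _ (ha x hx) (hb x hx)
    | smul r a _ ha =>
      intro x hx
      rw [mul_smul_comm]
      exact Submodule.smul_mem _ _ (ha x hx)
  induction x using CliffordAlgebra.induction with
  | algebraMap r =>
    rw [Algebra.algebraMap_eq_smul_one]
    exact Submodule.smul_mem _ _ (by simpa [bas] using hmem ⟨[], List.Pairwise.nil⟩)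
  | ι v =>
    have hv : v = ∑ i, (v i) • (Pi.single i 1 : Fin m → ℝ) := by
      ext j
      rw [Finset.sum_apply]
      simp [Pi.single_apply]
    rw [hv, map_sum]
    refine Submodule.sum_mem _ fun i _ => ?_
    rw [map_smul]
    refine Submodule.smul_mem _ _ ?_
    have : ι (Qneg m) (Pi.single i 1) = bas m ⟨[i], List.pairwise_singleton _ i⟩ := by
      simp [bas, PL, gen]
    rw [this]
    exact hmem _
  | mul a b ha hb => exact hmul b hb a ha
  | add a b ha hb => exact Submodule.add_mem _ ha hb

lemma mem_span_bas (x : CliffordAlgebra (Qneg m)) :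
    x ∈ Submodule.span ℝ (Set.range (bas m)) := by
  rw [span_bas_top]; trivial

lemma Tb_bas_self (i : SIdx m) : Tb m (bas m i) (bas m i) = 1 := by
  rw [bas, Tb_PL i.2 i.2, if_pos rfl]

lemma Tb_bas_ne {i j : SIdx m} (h : i ≠ j) : Tb m (bas m i) (bas m j) = 0 := by
  rw [bas, bas, Tb_PL i.2 j.2, if_neg (fun e => h (Subtype.ext e))]

lemma Tb_nonneg (x : CliffordAlgebra (Qneg m)) : 0 ≤ Tb m x x := by
  classical
  obtain ⟨c, rfl⟩ := Finsupp.mem_span_range_iff_exists_finsupp.mp (mem_span_bas x)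
  have hbas : ∀ a b : SIdx m, Tb m (bas m a) (bas m b) = if a = b then 1 else 0 := by
    intro a b
    by_cases h : a = b
    · rw [if_pos h, h, Tb_bas_self]
    · rw [if_neg h, Tb_bas_ne h]
  rw [Finsupp.sum, map_sum]
  refine Finset.sum_nonneg fun b hb => ?_
  have : Tb m (∑ a ∈ c.support, c a • bas m a) (c b • bas m b) = c b * c b := by
    rw [map_smul, map_sum, LinearMap.coe_sum, Finset.sum_apply]
    rw [Finset.sum_congr rfl (fun a _ => by
      rw [map_smul, LinearMap.smul_apply, hbas, smul_eq_mul, mul_ite, mul_one, mul_zero])]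
    rw [Finset.sum_ite_eq' c.support b c, if_pos hb, smul_eq_mul]
  rw [this]
  exact mul_self_nonneg _

lemma Tb_symm (x y : CliffordAlgebra (Qneg m)) : Tb m x y = Tb m y x := by
  induction mem_span_bas x using Submodule.span_induction with
  | mem g hg =>
    obtain ⟨i, rfl⟩ := hg
    induction mem_span_bas y using Submodule.span_induction with
    | mem g' hg' =>
      obtain ⟨j, rfl⟩ := hg'
      by_cases h : i = j
      · rw [h]
      · rw [Tb_bas_ne h, Tb_bas_ne (fun e => h e.symm)]
    | zero => simp
    | add a b _ _ ha hb => simp only [map_add, LinearMap.add_apply, ha, hb]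
    | smul r a _ ha => simp only [map_smul, LinearMap.smul_apply, ha]
  | zero => simp
  | add a b _ _ ha hb => simp only [map_add, LinearMap.add_apply, ha, hb]
  | smul r a _ ha => simp only [map_smul, LinearMap.smul_apply, ha]

lemma PL_reverse (L : List (Fin m)) : reverse (PL m L) = PL m L.reverse := by
  induction L with
  | nil => simp [PL]
  | cons h t ih =>
    rw [PL_cons, reverse.map_mul, ih, gen, reverse_ι, ← gen, List.reverse_cons, PL_append]
    simp [PL]

lemma τ_PL_sorted {L : List (Fin m)} (hL : L.Pairwise (· < ·)) :
    τ m (PL m L) = if L = [] then 1 else 0 := by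
  cases L with
  | nil => simpa using τ_one
  | cons h t =>
    obtain ⟨hh, -⟩ := List.pairwise_cons.mp hL
    rw [τ_PL_cons_eq_zero (fun hm => lt_irrefl h (hh h hm)), if_neg (by simp)]

lemma τ_reverse (x : CliffordAlgebra (Qneg m)) : τ m (reverse x) = τ m x := by
  induction mem_span_bas x using Submodule.span_induction with
  | mem g hg =>
    obtain ⟨i, rfl⟩ := hg
    rw [bas, PL_reverse, τ_PL_sorted i.2]
    rcases hrev : i.1.reverse with _ | ⟨h, t⟩
    · have : i.1 = [] := by simpa using congrArg List.reverse hrev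
      rw [this, if_pos rfl]
      simpa using τ_one
    · have hnd : (i.1.reverse).Nodup := List.nodup_reverse.mpr i.2.nodup
      rw [hrev] at hnd
      obtain ⟨hh, -⟩ := List.nodup_cons.mp hnd
      rw [τ_PL_cons_eq_zero hh]
      have : i.1 ≠ [] := by
        intro e; rw [e] at hrev; simp at hrev
      rw [if_neg this]
  | zero => simp
  | add a b _ _ ha hb => simp only [map_add, ha, hb]
  | smul r a _ ha => simp only [map_smul, ha]

lemma involute_PL (L : List (Fin m)) :
    involute (PL m L) = ((-1 : ℝ) ^ L.length) • PL m L := by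
  induction L with
  | nil => simp [PL]
  | cons h t ih =>
    rw [PL_cons, map_mul, ih, gen, involute_ι, ← gen, List.length_cons, pow_succ,
      neg_mul, mul_smul_comm, ← PL_cons, mul_neg_one, neg_smul]

lemma τ_involute (x : CliffordAlgebra (Qneg m)) : τ m (involute x) = τ m x := by
  induction mem_span_bas x using Submodule.span_induction with
  | mem g hg =>
    obtain ⟨i, rfl⟩ := hg
    rcases hL : i.1 with _ | ⟨h, t⟩
    · rw [bas, hL]
      simp [PL]
    · rw [bas, hL, involute_PL, map_smul, τ_PL_sorted (hL ▸ i.2)]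
      simp
  | zero => simp
  | add a b _ _ ha hb => simp only [map_add, ha, hb]
  | smul r a _ ha => simp only [map_smul, ha]

lemma τ_mul_comm (x y : CliffordAlgebra (Qneg m)) : τ m (x * y) = τ m (y * x) := by
  induction mem_span_bas x using Submodule.span_induction with
  | mem g hg =>
    obtain ⟨i, rfl⟩ := hg
    induction mem_span_bas y using Submodule.span_induction with
    | mem g' hg' =>
      obtain ⟨j, rfl⟩ := hg'
      rw [bas, bas, ← PL_append, ← PL_append]
      by_cases h : i.1 = j.1
      · rw [h]
      · obtain ⟨c, M, hM, hmul, hfin⟩ := PL_reduce (i.1 ++ j.1)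
        obtain ⟨c', M', hM', hmul', hfin'⟩ := PL_reduce (j.1 ++ i.1)
        have hne : i.1.toFinset ≠ j.1.toFinset :=
          fun e => h (sorted_eq_of_toFinset_eq i.2 j.2 e)
        have hMne : M ≠ [] := by
          intro e
          rw [e] at hfin
          rw [oddSupp_append, oddSupp_nodup i.2.nodup, oddSupp_nodup j.2.nodup] at hfin
          exact hne (symmDiff_eq_bot.mp (by rw [← hfin]; rfl))
        have hM'ne : M' ≠ [] := by
          intro e
          rw [e] at hfin'
          rw [oddSupp_append, oddSupp_nodup i.2.nodup, oddSupp_nodup j.2.nodup,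
            symmDiff_comm] at hfin'
          exact hne (symmDiff_eq_bot.mp (by rw [← hfin']; rfl))
        rw [hmul, hmul', map_smul, map_smul, τ_PL_sorted hM, τ_PL_sorted hM',
          if_neg hMne, if_neg hM'ne, smul_zero, smul_zero]
    | zero => simp
    | add a b _ _ ha hb => simp only [mul_add, add_mul, map_add, ha, hb]
    | smul r a _ ha => simp only [mul_smul_comm, smul_mul_assoc, map_smul, ha]
  | zero => simp
  | add a b _ _ ha hb => simp only [mul_add, add_mul, map_add, ha, hb]
  | smul r a _ ha => simp only [mul_smul_comm, smul_mul_assoc, map_smul, ha]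


lemma cnormSq_involute (x : CliffordAlgebra (Qneg m)) :
    cnormSq (involute x) = cnormSq x := by
  unfold cnormSq
  rw [scalarPart_eq, scalarPart_eq]
  have h1 : cconj (involute x) = reverse x := by
    unfold cconj; rw [involute_involute]
  have h2 : reverse x * involute x = involute (cconj x * x) := by
    rw [map_mul]
    unfold cconj
    rw [← reverse_involute, involute_involute]
  rw [h1, h2, τ_involute]

lemma Tb_involute_right (x y : CliffordAlgebra (Qneg m)) :
    Tb m x (involute y) = τ m (x * reverse y) := by
  rw [Tb_apply]
  have h1 : cconj x * involute y = involute (reverse x * y) := by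
    unfold cconj
    rw [map_mul, reverse_involute]
  rw [h1, τ_involute, ← τ_reverse, reverse.map_mul, reverse_reverse, τ_mul_comm]

lemma cnormSq_nonneg (x : CliffordAlgebra (Qneg m)) : 0 ≤ cnormSq x :=
  cnormSq_eq_Tb x ▸ Tb_nonneg x

lemma cnormSq_sub_expand (x y : CliffordAlgebra (Qneg m)) :
    cnormSq (x - involute y) = cnormSq x + cnormSq y - 2 * τ m (x * reverse y) := by
  rw [cnormSq_eq_Tb]
  simp only [map_sub, LinearMap.sub_apply]
  rw [← cnormSq_eq_Tb, ← cnormSq_eq_Tb, cnormSq_involute,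
    Tb_symm (involute y) x, Tb_involute_right]
  ring

lemma cnormSq_add_expand (x y : CliffordAlgebra (Qneg m)) :
    cnormSq (x + involute y) = cnormSq x + cnormSq y + 2 * τ m (x * reverse y) := by
  rw [cnormSq_eq_Tb]
  simp only [map_add, LinearMap.add_apply]
  rw [← cnormSq_eq_Tb, ← cnormSq_eq_Tb, cnormSq_involute,
    Tb_symm (involute y) x, Tb_involute_right]
  ring

end Stmt13Aux

open Stmt13Aux

theorem stmt13 {m : ℕ} (α β γ δ : CliffordAlgebra (Qneg m)) (h : IsVahlen α β γ δ) :
    cnormSq (α - involute δ) + cnormSq (β + involute γ) =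
      (cnormSq α + cnormSq β + cnormSq γ + cnormSq δ) - 2 ∧
    2 ≤ cnormSq α + cnormSq β + cnormSq γ + cnormSq δ := by
  have hdet : α * reverse δ - β * reverse γ = 1 := h.2.2.2.2.1
  have hτ : τ m (α * reverse δ) - τ m (β * reverse γ) = 1 := by
    have := congrArg (τ m) hdet
    rw [map_sub] at this
    rw [this, ← map_one (algebraMap ℝ (CliffordAlgebra (Qneg m))), τ_algebraMap]
  have e1 := cnormSq_sub_expand α δ
  have e2 := cnormSq_add_expand β γ
  have part1 : cnormSq (α - involute δ) + cnormSq (β + involute γ) =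
      (cnormSq α + cnormSq β + cnormSq γ + cnormSq δ) - 2 := by
    rw [e1, e2]; linarith
  refine ⟨part1, ?_⟩
  have n1 := cnormSq_nonneg (α - involute δ)
  have n2 := cnormSq_nonneg (β + involute γ)
  linarith
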